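/- arXiv:2207.09702 — 3 statements merged into one kernel-verified Lean document; each statement's English description precedes it below -/
import Mathlib

section
/- Let V₄ be the image in S₄ = Equiv.Perm (Fin 4) of the commutator subgroup of A₄ = alternatingGroup (Fin 4), i.e. V₄ = Subgroup.map (alternatingGroup (Fin 4)).subtype (commutator (alternatingGroup (Fin 4))). Then the commutator ⁅alternatingGroup (Fin 4), (⊤ : Subgroup (Equiv.Perm (Fin 4)))⁆ is NOT contained in V₄. (Consequently, the subcrossed module (V₄, A₄) of the crossed module (S₄, S₄, id) fails the normality condition [N₂, T₁] ⊆ N₁, so the exact sequence 1 → R A₄ → R S₄ → R(ℤ/2) → 1 admits no fiberwise localization for the nullification functor P_{Xℤ}.) -/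
set_option maxRecDepth 4000
open scoped commutatorElement

private lemma K4mul : ∀ a b : Equiv.Perm (Fin 4),
    (Equiv.Perm.sign a = 1 ∧ a ^ 2 = 1) → (Equiv.Perm.sign b = 1 ∧ b ^ 2 = 1) →
    (Equiv.Perm.sign (a * b) = 1 ∧ (a * b) ^ 2 = 1) := by decide

private lemma K4inv : ∀ a : Equiv.Perm (Fin 4),
    (Equiv.Perm.sign a = 1 ∧ a ^ 2 = 1) →
    (Equiv.Perm.sign a⁻¹ = 1 ∧ a⁻¹ ^ 2 = 1) := by decide

/-- Klein-type subgroup: elements of A₄ of order dividing 2. -/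
def K4 : Subgroup (Equiv.Perm (Fin 4)) where
  carrier := {x | Equiv.Perm.sign x = 1 ∧ x ^ 2 = 1}
  one_mem' := by decide
  mul_mem' := fun {a b} ha hb => K4mul a b ha hb
  inv_mem' := fun {a} ha => K4inv a ha

private lemma commK4 : ∀ g s : Equiv.Perm (Fin 4),
    Equiv.Perm.sign g = 1 → Equiv.Perm.sign s = 1 →
    (Equiv.Perm.sign (g * s * g⁻¹ * s⁻¹) = 1 ∧ (g * s * g⁻¹ * s⁻¹) ^ 2 = 1) := by decide

/-- With V₄ the image in S₄ of the commutator subgroup of A₄,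
the commutator ⁅A₄, S₄⁆ is NOT contained in V₄. -/
theorem commutator_alternating_top_not_le_V4 :
    ¬ (⁅alternatingGroup (Fin 4), (⊤ : Subgroup (Equiv.Perm (Fin 4)))⁆ ≤
        Subgroup.map (alternatingGroup (Fin 4)).subtype
          (commutator (alternatingGroup (Fin 4)))) := by
  intro h
  have hmap : Subgroup.map (alternatingGroup (Fin 4)).subtype
      (commutator (alternatingGroup (Fin 4)))
      = ⁅alternatingGroup (Fin 4), alternatingGroup (Fin 4)⁆ := by
    rw [commutator_def, Subgroup.map_commutator, ← MonoidHom.range_eq_map,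
      Subgroup.range_subtype]
  have hK : ⁅alternatingGroup (Fin 4), alternatingGroup (Fin 4)⁆ ≤ K4 := by
    apply Subgroup.commutator_le.mpr
    intro g hg s hs
    rw [Equiv.Perm.mem_alternatingGroup] at hg hs
    have := commK4 g s hg hs
    show Equiv.Perm.sign ⁅g, s⁆ = 1 ∧ ⁅g, s⁆ ^ 2 = 1
    rwa [commutatorElement_def]
  set a : Equiv.Perm (Fin 4) := Equiv.swap 0 1 * Equiv.swap 1 2 with ha
  set s : Equiv.Perm (Fin 4) := Equiv.swap 0 1 with hs
  have hga : a ∈ alternatingGroup (Fin 4) := by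
    rw [Equiv.Perm.mem_alternatingGroup, ha]; decide
  have hmem : ⁅a, s⁆ ∈ ⁅alternatingGroup (Fin 4), (⊤ : Subgroup (Equiv.Perm (Fin 4)))⁆ :=
    Subgroup.commutator_mem_commutator hga (Subgroup.mem_top s)
  have h2 : ⁅a, s⁆ ^ 2 = 1 := (hK (hmap ▸ h hmem)).2
  rw [commutatorElement_def, ha, hs] at h2
  revert h2
  decide
end

section
/- In the dihedral group D₈ = DihedralGroup 4, the commutator subgroup C₂ = commutator (DihedralGroup 4) satisfies ⁅(⊤ : Subgroup (DihedralGroup 4)), commutator (DihedralGroup 4)⁆ = ⊥ while commutator (DihedralGroup 4) ≠ ⊥. (Hence for the kernel crossed module (C₂ ↪ D₈) of the nullification morphism ℓ : R D₈ → P_{Xℤ}(R D₈), one has P_{Xℤ}(C₂ ↪ D₈) = (C₂/[D₈,C₂], 1) = (C₂, 1) ≠ 1, so the kernel of the nullification morphism is not Xℤ-acyclic.) -/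
lemma commutator_d8_le_center :
    commutator (DihedralGroup 4) ≤ Subgroup.center (DihedralGroup 4) := by
  rw [commutator_def, Subgroup.commutator_le]
  intro g hg h hh
  clear hg hh
  rw [Subgroup.mem_center_iff]
  revert g h
  decide

/-- In D₈, the commutator subgroup C₂ is central and nontrivial:
⁅D₈, C₂⁆ = ⊥ and C₂ ≠ ⊥. -/
theorem commutator_dihedral_central_nontrivial :
    ⁅(⊤ : Subgroup (DihedralGroup 4)), commutator (DihedralGroup 4)⁆ = ⊥ ∧
      commutator (DihedralGroup 4) ≠ ⊥ := by
  constructor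
  · rw [eq_bot_iff, Subgroup.commutator_le]
    intro g _ h hh
    have hz := (Subgroup.mem_center_iff.mp (commutator_d8_le_center hh)) g
    simp [commutatorElement_def, hz, mul_assoc]
  · intro hbot
    open scoped commutatorElement in
    have hmem : ⁅DihedralGroup.r 1, DihedralGroup.sr 0⁆ ∈ commutator (DihedralGroup 4) :=
      Subgroup.commutator_mem_commutator (Subgroup.mem_top _) (Subgroup.mem_top _)
    rw [hbot, Subgroup.mem_bot] at hmem
    revert hmem
    decide
end

section
/- Let (N₁, N₂) be a normal subcrossed module of the crossed module (T₁, T₂, ∂, φ) (so in particular N₁ is normal in T₁ and N₂ is normal in T₂). Then the componentwise quotient is again a crossed module: there exists a group homomorphism φ̄ : T₂ ⧸ N₂ →* MulAut (T₁ ⧸ N₁) satisfying φ̄ (⟦t₂⟧) (⟦t₁⟧) = ⟦φ t₂ t₁⟧ for all t₂ ∈ T₂ and t₁ ∈ T₁, and the induced homomorphism ∂̄ : T₁ ⧸ N₁ →* T₂ ⧸ N₂ (with ∂̄ ⟦t₁⟧ = ⟦∂ t₁⟧) together with φ̄ satisfies the crossed module axioms: ∂̄(φ̄ b x) = b * ∂̄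 x * b⁻¹ for all b ∈ T₂ ⧸ N₂, x ∈ T₁ ⧸ N₁, and φ̄ (∂̄ x) y = x * y * x⁻¹ for all x, y ∈ T₁ ⧸ N₁. -/
section Aux

variable {T₁ T₂ : Type*} [Group T₁] [Group T₂]
  (φ : T₂ →* MulAut T₁) (N₁ : Subgroup T₁) [N₁.Normal]
  (norm_act : ∀ (t₂ : T₂), ∀ n₁ ∈ N₁, φ t₂ n₁ ∈ N₁)

/-- the induced monoid hom on the quotient -/
def qm (t₂ : T₂) : T₁ ⧸ N₁ →* T₁ ⧸ N₁ :=
  QuotientGroup.lift N₁ ((QuotientGroup.mk' N₁).comp (φ t₂).toMonoidHom)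
    (fun n hn => (QuotientGroup.eq_one_iff _).2 (norm_act t₂ n hn))

@[simp] lemma qm_mk (t₂ : T₂) (t₁ : T₁) :
    qm φ N₁ norm_act t₂ (t₁ : T₁ ⧸ N₁) = ((φ t₂ t₁ : T₁) : T₁ ⧸ N₁) := rfl

/-- the induced hom T₂ →* MulAut (T₁ ⧸ N₁) -/
def qAut : T₂ →* MulAut (T₁ ⧸ N₁) where
  toFun t₂ :=
    { toFun := qm φ N₁ norm_act t₂
      invFun := qm φ N₁ norm_act t₂⁻¹
      left_inv := fun x => by
        induction x using QuotientGroup.induction_on with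
        | H z => simp [← MulAut.mul_apply, ← map_mul]
      right_inv := fun x => by
        induction x using QuotientGroup.induction_on with
        | H z =>
          show ((φ t₂ (φ t₂⁻¹ z) : T₁) : T₁ ⧸ N₁) = _
          rw [← MulAut.mul_apply, ← map_mul, mul_inv_cancel, map_one, MulAut.one_apply]
      map_mul' := map_mul _ }
  map_one' := by
    ext x
    induction x using QuotientGroup.induction_on with
    | H z => simp
  map_mul' a b := by
    ext x
    induction x using QuotientGroup.induction_on with
    | H z => simp

@[simp] lemma qAut_apply (t₂ : T₂) (t₁ : T₁) :
    qAut φ N₁ norm_act t₂ (t₁ : T₁ ⧸ N₁) = ((φ t₂ t₁ : T₁) : T₁ ⧸ N₁) := rfl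

end Aux

/-- The componentwise quotient of a crossed module (T₁, T₂, δ, φ)
by a normal subcrossed module (N₁, N₂) is again a crossed module: there are an
induced boundary map δ̄ : T₁ ⧸ N₁ →* T₂ ⧸ N₂ and an induced action
φ̄ : T₂ ⧸ N₂ →* MulAut (T₁ ⧸ N₁) satisfying the crossed module axioms. -/
theorem quotient_crossed_module
    {T₁ T₂ : Type*} [Group T₁] [Group T₂]
    (δ : T₁ →* T₂) (φ : T₂ →* MulAut T₁)
    (equiv : ∀ (b : T₂) (x : T₁), δ (φ b x) = b * δ x * b⁻¹)
    (peiffer : ∀ x y : T₁, φ (δ x) y = x * y * x⁻¹)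
    (N₁ : Subgroup T₁) (N₂ : Subgroup T₂)
    [N₁.Normal] [N₂.Normal]
    (sub_δ : ∀ n₁ ∈ N₁, δ n₁ ∈ N₂)
    (sub_act : ∀ n₂ ∈ N₂, ∀ n₁ ∈ N₁, φ n₂ n₁ ∈ N₁)
    (norm_act : ∀ (t₂ : T₂), ∀ n₁ ∈ N₁, φ t₂ n₁ ∈ N₁)
    (norm_comm : ∀ n₂ ∈ N₂, ∀ t₁ : T₁, φ n₂ t₁ * t₁⁻¹ ∈ N₁) :
    ∃ (δbar : T₁ ⧸ N₁ →* T₂ ⧸ N₂) (φbar : (T₂ ⧸ N₂) →* MulAut (T₁ ⧸ N₁)),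
      (∀ t₁ : T₁, δbar ((t₁ : T₁ ⧸ N₁)) = ((δ t₁ : T₂) : T₂ ⧸ N₂)) ∧
      (∀ (t₂ : T₂) (t₁ : T₁),
        φbar ((t₂ : T₂ ⧸ N₂)) ((t₁ : T₁ ⧸ N₁)) = ((φ t₂ t₁ : T₁) : T₁ ⧸ N₁)) ∧
      (∀ (b : T₂ ⧸ N₂) (x : T₁ ⧸ N₁), δbar (φbar b x) = b * δbar x * b⁻¹) ∧
      (∀ x y : T₁ ⧸ N₁, φbar (δbar x) y = x * y * x⁻¹) := by
  refine ⟨QuotientGroup.lift N₁ ((QuotientGroup.mk' N₂).comp δ)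
      (fun n hn => (QuotientGroup.eq_one_iff _).2 (sub_δ n hn)),
    QuotientGroup.lift N₂ (qAut φ N₁ norm_act) ?_, fun t₁ => rfl, fun t₂ t₁ => rfl, ?_, ?_⟩
  · intro n hn
    ext x
    induction x using QuotientGroup.induction_on with
    | H z =>
      simp only [qAut_apply, MulAut.one_apply]
      exact (QuotientGroup.eq_iff_div_mem).2 (by
        simpa [div_eq_mul_inv] using norm_comm n hn z)
  · intro b x
    induction b using QuotientGroup.induction_on with
    | H tb =>
      induction x using QuotientGroup.induction_on with
      | H tx =>
        show ((δ (φ tb tx) : T₂) : T₂ ⧸ N₂) = _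
        rw [equiv]
        push_cast
        rfl
  · intro x y
    induction x using QuotientGroup.induction_on with
    | H tx =>
      induction y using QuotientGroup.induction_on with
      | H ty =>
        show ((φ (δ tx) ty : T₁) : T₁ ⧸ N₁) = _
        rw [peiffer]
        push_cast
        rfl
end
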